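/- Let A ⊆ ℤ_{≥0}^n be the lattice points of an anti-blocking lattice polytope, and let Λ and Λ' be two ordered lists of length r of pairs in A × {-1,1}^n that agree in their first r−2 entries and satisfy ω(Λ) = ω(Λ') ∈ ℤ_{≥0}^n. Then with the canonical projections ν(Λ) = (c_1,...,c_{r-2},c,d) and ν(Λ') = (c_1',...,c_{r-2}',c',d') one has c_j = c_j' for 1 ≤ j ≤ r−2 and c + d = c' + d'. -/

import Mathlib

open scoped Pointwise

def IsSign {n : ℕ} (ε : Fin n → ℝ) : Prop := ∀ i, ε i = 1 ∨ ε i = -1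

def AntiBlocking {n : ℕ} (P : Set (Fin n → ℝ)) : Prop :=
  (∀ x ∈ P, ∀ i, 0 ≤ x i) ∧
  ∀ y ∈ P, ∀ x : Fin n → ℝ, (∀ i, 0 ≤ x i ∧ x i ≤ y i) → x ∈ P

def PM {n : ℕ} (P : Set (Fin n → ℝ)) : Set (Fin n → ℝ) :=
  {z | ∃ ε x, IsSign ε ∧ x ∈ P ∧ z = ε * x}

def IsLatticePt {n : ℕ} (x : Fin n → ℝ) : Prop := ∀ i, ∃ m : ℤ, x i = (m : ℝ)

def IsLatticePolytope {n : ℕ} (P : Set (Fin n → ℝ)) : Prop :=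
  ∃ V : Finset (Fin n → ℝ), (∀ v ∈ V, IsLatticePt v) ∧ P = convexHull ℝ (V : Set (Fin n → ℝ))

def IDP {n : ℕ} (P : Set (Fin n → ℝ)) : Prop :=
  ∀ t : ℕ, 1 ≤ t → ∀ x : Fin n → ℝ, IsLatticePt x → x ∈ (t : ℝ) • P →
    ∃ y : Fin t → (Fin n → ℝ), (∀ i, y i ∈ P ∧ IsLatticePt (y i)) ∧ x = ∑ i, y i

def Orthant {n : ℕ} (ε : Fin n → ℝ) : Set (Fin n → ℝ) := {x | ∀ i, 0 ≤ x i * ε i}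

def bb {n r : ℕ} (a ε : Fin r → Fin n → ℤ) (j : Fin r) (k : Fin n) : ℤ :=
  if ε j k = 1 then a j k else 0

/-- `cc a ε j k` is the number of occurrences of `j` among the first `ω_k` entries of the
list `P_k(Λ)` (closed-form description). -/
def cc {n r : ℕ} (a ε : Fin r → Fin n → ℤ) (j : Fin r) (k : Fin n) : ℤ :=
  min (bb a ε j k)
    (max 0 ((∑ j', ε j' k * a j' k) - ∑ j' ∈ Finset.univ.filter (fun j' => j' < j), bb a ε j' k))

theorem stmt10 {n r : ℕ} (hr : 2 ≤ r) (P : Set (Fin n → ℝ)) (hP : AntiBlocking P)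
    (hlat : IsLatticePolytope P) (a ε a' ε' : Fin r → Fin n → ℤ)
    (haP : ∀ j, (fun k => (a j k : ℝ)) ∈ P) (haP' : ∀ j, (fun k => (a' j k : ℝ)) ∈ P)
    (hε : ∀ j k, ε j k = 1 ∨ ε j k = -1) (hε' : ∀ j k, ε' j k = 1 ∨ ε' j k = -1)
    (hagree : ∀ j : Fin r, (j : ℕ) < r - 2 → a j = a' j ∧ ε j = ε' j)
    (hωeq : ∀ k, ∑ j, ε j k * a j k = ∑ j, ε' j k * a' j k)
    (hω : ∀ k, 0 ≤ ∑ j, ε j k * a j k) :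
    (∀ j : Fin r, (j : ℕ) < r - 2 → ∀ k, cc a ε j k = cc a' ε' j k) ∧
    (∀ k, cc a ε ⟨r - 2, by omega⟩ k + cc a ε ⟨r - 1, by omega⟩ k
        = cc a' ε' ⟨r - 2, by omega⟩ k + cc a' ε' ⟨r - 1, by omega⟩ k) := by
  have ha0 : ∀ j k, 0 ≤ a j k := fun j k => by
    have := hP.1 _ (haP j) k; exact_mod_cast this
  have ha0' : ∀ j k, 0 ≤ a' j k := fun j k => by
    have := hP.1 _ (haP' j) k; exact_mod_cast this
  have hbb0 : ∀ j k, 0 ≤ bb a ε j k := by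
    intro j k; unfold bb; split
    · exact ha0 j k
    · exact le_refl 0
  have hbb0' : ∀ j k, 0 ≤ bb a' ε' j k := by
    intro j k; unfold bb; split
    · exact ha0' j k
    · exact le_refl 0
  have hle : ∀ j k, ε j k * a j k ≤ bb a ε j k := by
    intro j k; unfold bb
    rcases hε j k with h | h <;> rw [h] <;> simp
    nlinarith [ha0 j k]
  have hle' : ∀ j k, ε' j k * a' j k ≤ bb a' ε' j k := by
    intro j k; unfold bb
    rcases hε' j k with h | h <;> rw [h] <;> simp
    nlinarith [ha0' j k]
  have hbbeq : ∀ j : Fin r, (j : ℕ) < r - 2 → ∀ k, bb a ε j k = bb a' ε' j k := by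
    intro j hj k
    obtain ⟨h1, h2⟩ := hagree j hj
    unfold bb; rw [h1, h2]
  constructor
  · intro j hj k
    unfold cc
    rw [hbbeq j hj k, hωeq k]
    congr 3
    apply Finset.sum_congr rfl
    intro j' hj'
    simp only [Finset.mem_filter] at hj'
    exact hbbeq j' (lt_trans hj'.2 hj) k
  · intro k
    set j2 : Fin r := ⟨r - 2, by omega⟩ with hj2
    set j1 : Fin r := ⟨r - 1, by omega⟩ with hj1
    have hfilt1 : Finset.univ.filter (fun j' => j' < j1)
        = insert j2 (Finset.univ.filter (fun j' => j' < j2)) := by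
      ext x
      simp only [Finset.mem_filter, Finset.mem_insert, Finset.mem_univ, true_and,
        Fin.lt_def, Fin.ext_iff, hj1, hj2]
      omega
    have hj2mem : j2 ∉ Finset.univ.filter (fun j' => j' < j2) := by
      simp only [Finset.mem_filter, Finset.mem_univ, true_and, lt_irrefl, not_false_eq_true]
    have hj1mem : j1 ∉ insert j2 (Finset.univ.filter (fun j' => j' < j2)) := by
      simp only [Finset.mem_insert, Finset.mem_filter, Finset.mem_univ, true_and,
        Fin.lt_def, Fin.ext_iff, hj1, hj2]
      omega
    have huniv : (Finset.univ : Finset (Fin r))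
        = insert j1 (insert j2 (Finset.univ.filter (fun j' => j' < j2))) := by
      ext x
      have := x.isLt
      have e1 : (j1 : ℕ) = r - 1 := rfl
      have e2 : (j2 : ℕ) = r - 2 := rfl
      simp only [Finset.mem_insert, Finset.mem_filter, Finset.mem_univ, true_and,
        Fin.lt_def, Fin.ext_iff, true_iff]
      show _ ∨ _ ∨ x.val < r - 2
      omega
    set T : ℤ := ∑ j' ∈ Finset.univ.filter (fun j' => j' < j2), bb a ε j' k with hT
    set T' : ℤ := ∑ j' ∈ Finset.univ.filter (fun j' => j' < j2), bb a' ε' j' k with hT'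
    have hTT : T = T' := by
      apply Finset.sum_congr rfl
      intro j' hj'
      simp only [Finset.mem_filter, Fin.lt_def, hj2] at hj'
      exact hbbeq j' hj'.2 k
    set S : ℤ := ∑ j, ε j k * a j k with hS
    have hSsum : S ≤ T + bb a ε j2 k + bb a ε j1 k := by
      have h1 : S ≤ ∑ j, bb a ε j k := Finset.sum_le_sum (fun j _ => hle j k)
      have h2 : ∑ j, bb a ε j k = T + bb a ε j2 k + bb a ε j1 k := by
        rw [huniv, Finset.sum_insert hj1mem, Finset.sum_insert hj2mem]
        ring
      omega
    have hSsum' : S ≤ T + bb a' ε' j2 k + bb a' ε' j1 k := by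
      have h1 : ∑ j, ε' j k * a' j k ≤ ∑ j, bb a' ε' j k :=
        Finset.sum_le_sum (fun j _ => hle' j k)
      have h2 : ∑ j, bb a' ε' j k = T' + bb a' ε' j2 k + bb a' ε' j1 k := by
        rw [huniv, Finset.sum_insert hj1mem, Finset.sum_insert hj2mem]
        ring
      have h3 : S = ∑ j, ε' j k * a' j k := hωeq k
      omega
    have hcc2 : cc a ε j2 k = min (bb a ε j2 k) (max 0 (S - T)) := rfl
    have hcc1 : cc a ε j1 k = min (bb a ε j1 k) (max 0 (S - (T + bb a ε j2 k))) := by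
      unfold cc
      rw [hfilt1, Finset.sum_insert hj2mem, ← hS, ← hT]
      ring_nf
    have hcc2' : cc a' ε' j2 k = min (bb a' ε' j2 k) (max 0 (S - T)) := by
      unfold cc
      rw [← hωeq k, ← hS, hTT]
    have hcc1' : cc a' ε' j1 k = min (bb a' ε' j1 k) (max 0 (S - (T + bb a' ε' j2 k))) := by
      unfold cc
      rw [hfilt1, Finset.sum_insert hj2mem, ← hT', ← hωeq k, ← hS, hTT]
      ring_nf
    rw [hcc1, hcc2, hcc1', hcc2']
    have h1 := hbb0 j1 k
    have h2 := hbb0 j2 k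
    have h1' := hbb0' j1 k
    have h2' := hbb0' j2 k
    omega
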